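/- For n, t ∈ ℕ with n > t and x ∈ I_t \ I_{t+1}, the 2^n-th Fejér kernel satisfies: K_{2^n}(x) = 2^{t−1} if x ∈ I_n(e_t), K_{2^n}(x) = (2^n + 1)/2 if x ∈ I_n, and K_{2^n}(x) = 0 otherwise. -/

import Mathlib

open MeasureTheory Filter Finset
open scoped ENNReal NNReal

noncomputable section

/-- The dyadic group `G = ∏ Z₂`. -/
abbrev G : Type := ℕ → ZMod 2

instance : TopologicalSpace (ZMod 2) := ⊥
instance : DiscreteTopology (ZMod 2) := ⟨rfl⟩
instance : MeasurableSpace (ZMod 2) := ⊤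
instance : BorelSpace (ZMod 2) := ⟨borel_eq_top_of_discrete.symm⟩
instance : ContinuousAdd (ZMod 2) := ⟨continuous_of_discreteTopology⟩
instance : ContinuousNeg (ZMod 2) := ⟨continuous_of_discreteTopology⟩
instance : IsTopologicalAddGroup (ZMod 2) := ⟨⟩

/-- The normalized Haar measure `μ` on the dyadic group `G`. -/
def μG : Measure G := Measure.addHaarMeasure ⊤

/-- The Rademacher functions `r_k(x) = (-1)^{x_k}`. -/
def rad (k : ℕ) (x : G) : ℝ := (-1 : ℝ) ^ (x k).val

/-- The Walsh functions `w_n = ∏_k r_k^{n_k}`, where `n = ∑ n_k 2^k`. -/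
def walsh (n : ℕ) (x : G) : ℝ := ∏ k ∈ Finset.range n, rad k x ^ (Nat.testBit n k).toNat

/-- The Dirichlet kernels `D_n = ∑_{k=0}^{n-1} w_k`. -/
def dirichlet (n : ℕ) (x : G) : ℝ := ∑ k ∈ Finset.range n, walsh k x

/-- The Fejér kernels `K_n = (1/n) ∑_{k=1}^{n} D_k`. -/
def fejer (n : ℕ) (x : G) : ℝ := (n : ℝ)⁻¹ * ∑ k ∈ Finset.Icc 1 n, dirichlet k x

/-- The Cesàro numbers `A_n^α = ((α+1)⋯(α+n))/n!`. -/
def cesA (α : ℝ) (n : ℕ) : ℝ := (∏ i ∈ Finset.range n, (α + i + 1)) / n.factorial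

/-- The `(C,α)` kernels `K_n^α = (1/A_n^α) ∑_{k=1}^n A_{n-k}^{α-1} D_k`. -/
def cesKernel (α : ℝ) (n : ℕ) (x : G) : ℝ :=
  (cesA α n)⁻¹ * ∑ k ∈ Finset.Icc 1 n, cesA (α - 1) (n - k) * dirichlet k x

/-- Walsh–Fourier coefficients of an integrable function. -/
def walshCoeff (f : G → ℝ) (k : ℕ) : ℝ := ∫ x, f x * walsh k x ∂μG

/-- Partial sums `S_m f` of the Walsh–Fourier series. -/
def partialSum (f : G → ℝ) (m : ℕ) (x : G) : ℝ :=
  ∑ k ∈ Finset.range m, walshCoeff f k * walsh k x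

/-- The `(C,α)` means `σ_n^α f = (1/A_n^α) ∑_{k=1}^n A_{n-k}^{α-1} S_k f`. -/
def cesaroMean (α : ℝ) (f : G → ℝ) (n : ℕ) (x : G) : ℝ :=
  (cesA α n)⁻¹ * ∑ k ∈ Finset.Icc 1 n, cesA (α - 1) (n - k) * partialSum f k x

/-- The dyadic interval `I_n(x)`. -/
def dyadicI (n : ℕ) (x : G) : Set G := {y | ∀ i < n, y i = x i}

/-- `e_k ∈ G`: the element whose `k`-th coordinate is `1` and all others `0`. -/
def eG (k : ℕ) : G := fun i => if i = k then 1 else 0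

/-- The projection onto the first `n` coordinates. -/
def projG (n : ℕ) : G → (Fin n → ZMod 2) := fun x i => x i

/-- The dyadic filtration `ℱ_n`, generated by the dyadic intervals of length `n`. -/
def dyadicF : Filtration ℕ (inferInstance : MeasurableSpace G) where
  seq n := MeasurableSpace.comap (projG n) inferInstance
  mono' := by
    intro n m hnm
    have h : projG n = (fun (y : Fin m → ZMod 2) (i : Fin n) => y (Fin.castLE hnm i)) ∘ projG m :=
      rfl
    simp only []
    rw [h, ← MeasurableSpace.comap_comp]
    exact MeasurableSpace.comap_mono
      ((measurable_pi_lambda _ fun i => measurable_pi_apply _).comap_le)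
  le' := fun n => (measurable_pi_lambda _ fun i => measurable_pi_apply _).comap_le

/-- The Walsh–Fourier coefficients `F̂(k) = lim_n ∫ F_n w_k dμ` of a martingale. -/
def martCoeff (F : ℕ → G → ℝ) (k : ℕ) : ℝ :=
  limUnder atTop (fun n => ∫ x, F n x * walsh k x ∂μG)

/-- Partial sums `S_m F` of the Walsh–Fourier series of a martingale. -/
def martSum (F : ℕ → G → ℝ) (m : ℕ) (x : G) : ℝ :=
  ∑ k ∈ Finset.range m, martCoeff F k * walsh k x

/-- The `(C,α)` means of a martingale. -/
def martCesaro (α : ℝ) (F : ℕ → G → ℝ) (n : ℕ) (x : G) : ℝ :=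
  (cesA α n)⁻¹ * ∑ k ∈ Finset.Icc 1 n, cesA (α - 1) (n - k) * martSum F k x

/-- The `L_p(G)` quasi-norm `(∫ |f|^p dμ)^{1/p}`, valued in `ℝ≥0∞`. -/
def LpNormG (p : ℝ) (f : G → ℝ) : ℝ≥0∞ :=
  (∫⁻ x, ENNReal.ofReal |f x| ^ p ∂μG) ^ (1 / p)

/-- The Hardy space quasi-norm `‖F‖_{H_p} = ‖sup_n |F_n|‖_p` of a martingale. -/
def hardyNorm (p : ℝ) (F : ℕ → G → ℝ) : ℝ≥0∞ :=
  (∫⁻ x, (⨆ n, ENNReal.ofReal |F n x|) ^ p ∂μG) ^ (1 / p)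

/-- The Hardy quasi-norm of an integrable function, via its generated martingale `(E_n f)`. -/
def hardyFnNorm (p : ℝ) (f : G → ℝ) : ℝ≥0∞ :=
  hardyNorm p (fun n => μG[f | dyadicF n])


lemma rad_of_zero {x : G} {k : ℕ} (h : x k = 0) : rad k x = 1 := by simp [rad, h]
lemma rad_of_one {x : G} {k : ℕ} (h : x k = 1) : rad k x = -1 := by
  simp [rad, h, ZMod.val_one]

lemma zmod2_cases (a : ZMod 2) : a = 0 ∨ a = 1 := by revert a; decide

lemma walsh_eq_prod (n j : ℕ) (hj : j < 2 ^ n) (x : G) :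
    walsh j x = ∏ k ∈ Finset.range n, rad k x ^ (j.testBit k).toNat := by
  unfold walsh
  rcases le_total j n with h | h
  · apply Finset.prod_subset (Finset.range_subset_range.2 h)
    intro k _ hk'
    have hk : j ≤ k := by simpa using hk'
    have : j.testBit k = false :=
      Nat.testBit_lt_two_pow (lt_of_le_of_lt hk (Nat.lt_two_pow_self (n := k)))
    simp [this]
  · symm
    apply Finset.prod_subset (Finset.range_subset_range.2 h)
    intro k _ hk'
    have hk : n ≤ k := by simpa using hk'
    have : j.testBit k = false :=
      Nat.testBit_lt_two_pow (lt_of_lt_of_le hj (Nat.pow_le_pow_right (by norm_num) hk))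
    simp [this]

lemma sum_prod_bits (n : ℕ) (g : ℕ → Bool → ℝ) :
    ∑ j ∈ Finset.range (2 ^ n), ∏ k ∈ Finset.range n, g k (j.testBit k)
      = ∏ k ∈ Finset.range n, (g k false + g k true) := by
  induction n with
  | zero => simp
  | succ n ih =>
    have h2 : 2 ^ (n + 1) = 2 ^ n + 2 ^ n := by ring
    have split : ∀ (f : ℕ → ℝ) (m : ℕ), ∑ j ∈ Finset.range (m + m), f j
        = ∑ j ∈ Finset.range m, f j + ∑ j ∈ Finset.range m, f (m + j) := by
      intro f m
      rw [Finset.range_eq_Ico,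
        ← Finset.sum_Ico_consecutive f (Nat.zero_le m) (Nat.le_add_right m m),
        Finset.sum_Ico_eq_sum_range]
      rw [Finset.sum_Ico_eq_sum_range]
      simp [Nat.Ico_zero_eq_range]
    rw [h2, split]
    have hA : ∀ j ∈ Finset.range (2 ^ n),
        ∏ k ∈ Finset.range (n + 1), g k (j.testBit k)
          = (∏ k ∈ Finset.range n, g k (j.testBit k)) * g n false := by
      intro j hj
      rw [Finset.prod_range_succ, Nat.testBit_lt_two_pow (Finset.mem_range.1 hj)]
    have hB : ∀ j ∈ Finset.range (2 ^ n),
        ∏ k ∈ Finset.range (n + 1), g k ((2 ^ n + j).testBit k)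
          = (∏ k ∈ Finset.range n, g k (j.testBit k)) * g n true := by
      intro j hj
      rw [Finset.prod_range_succ, Nat.testBit_two_pow_add_eq,
        Nat.testBit_lt_two_pow (Finset.mem_range.1 hj)]
      congr 1
      apply Finset.prod_congr rfl
      intro k hk
      rw [Nat.testBit_two_pow_add_gt (Finset.mem_range.1 hk)]
    rw [Finset.sum_congr rfl hA, Finset.sum_congr rfl hB, ← Finset.sum_mul,
      ← Finset.sum_mul, ih, Finset.prod_range_succ]
    ring

lemma nat_eq_sum_bits : ∀ n j, j < 2 ^ n → j = ∑ i ∈ Finset.range n, 2 ^ i * (j.testBit i).toNat := by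
  intro n
  induction n with
  | zero => intro j hj; interval_cases j; simp
  | succ n ih =>
    intro j hj
    rw [Finset.sum_range_succ']
    have h1 : ∀ i, j.testBit (i + 1) = (j / 2).testBit i := fun i => Nat.testBit_add_one j i
    have h2 : ∑ i ∈ Finset.range n, 2 ^ (i + 1) * (j.testBit (i + 1)).toNat
        = 2 * ∑ i ∈ Finset.range n, 2 ^ i * ((j / 2).testBit i).toNat := by
      rw [Finset.mul_sum]
      apply Finset.sum_congr rfl
      intro i _
      rw [h1]
      ring
    have h3 : j / 2 < 2 ^ n := by omega
    have h4 := ih (j / 2) h3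
    have h5 : (j.testBit 0).toNat = j % 2 := by
      rw [Nat.testBit_zero]
      rcases Nat.mod_two_eq_zero_or_one j with h | h <;> simp [h]
    rw [h2, ← h4]
    simp only [pow_zero, one_mul, h5]
    omega

lemma sum_dirichlet (N : ℕ) (x : G) :
    ∑ k ∈ Finset.Icc 1 N, dirichlet k x
      = ∑ j ∈ Finset.range N, ((N : ℝ) - j) * walsh j x := by
  induction N with
  | zero => simp
  | succ N ih =>
    rw [Finset.sum_Icc_succ_top (by omega), ih]
    have : ∀ j ∈ Finset.range (N + 1),
        (((N : ℕ) + 1 : ℝ) - j) * walsh j x = ((N : ℝ) - j) * walsh j x + walsh j x := by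
      intro j _; ring
    push_cast
    rw [Finset.sum_congr rfl this, Finset.sum_add_distrib,
      Finset.sum_range_succ (fun j => ((N : ℝ) - j) * walsh j x)]
    simp [dirichlet]

/-- explicit formula for the Fejér kernel `K_{2^n}` on `I_t \ I_{t+1}` (`n > t`). -/
theorem statement6 (n t : ℕ) (hnt : t < n) (x : G)
    (hx : x ∈ dyadicI t 0 \ dyadicI (t + 1) 0) :
    (x ∈ dyadicI n (eG t) → fejer (2 ^ n) x = (2 : ℝ) ^ t / 2) ∧
    (x ∈ dyadicI n 0 → fejer (2 ^ n) x = ((2 : ℝ) ^ n + 1) / 2) ∧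
    (x ∉ dyadicI n (eG t) → x ∉ dyadicI n 0 → fejer (2 ^ n) x = 0) := by
  obtain ⟨hxt, hxt1⟩ := hx
  simp only [dyadicI, Set.mem_setOf_eq, Set.mem_diff, Pi.zero_apply] at hxt hxt1 ⊢
  have hxtt : x t = 1 := by
    rcases zmod2_cases (x t) with h | h
    · exfalso; apply hxt1; intro i hi
      rcases Nat.lt_succ_iff_lt_or_eq.1 hi with hi' | rfl
      · exact hxt i hi'
      · exact h
    · exact h
  have htn : t ∈ Finset.range n := Finset.mem_range.2 hnt
  have hradt : rad t x = -1 := rad_of_one hxtt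
  have h1rt : (1 : ℝ) + rad t x = 0 := by rw [hradt]; ring
  -- Dirichlet kernel sum as a product
  have hDgen : ∑ j ∈ Finset.range (2 ^ n), walsh j x
      = ∏ k ∈ Finset.range n, (1 + rad k x) := by
    have h := sum_prod_bits n (fun k b => rad k x ^ b.toNat)
    simp only [Bool.toNat_false, Bool.toNat_true, pow_zero, pow_one] at h
    rw [Finset.sum_congr rfl (fun j hj => walsh_eq_prod n j (Finset.mem_range.1 hj) x), h]
  -- the bit-weighted Walsh sums
  have hU : ∀ i ∈ Finset.range n,
      ∑ j ∈ Finset.range (2 ^ n), ((j.testBit i).toNat : ℝ) * walsh j x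
        = rad i x * ∏ k ∈ (Finset.range n).erase i, (1 + rad k x) := by
    intro i hi
    have key : ∀ j ∈ Finset.range (2 ^ n), ((j.testBit i).toNat : ℝ) * walsh j x
        = ∏ k ∈ Finset.range n,
            ((if k = i then ((j.testBit k).toNat : ℝ) else 1) * rad k x ^ (j.testBit k).toNat) := by
      intro j hj
      rw [Finset.prod_mul_distrib, walsh_eq_prod n j (Finset.mem_range.1 hj) x]
      congr 1
      rw [Finset.prod_ite_eq' (Finset.range n) i (fun k => ((j.testBit k).toNat : ℝ)), if_pos hi]
    rw [Finset.sum_congr rfl key,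
      sum_prod_bits n (fun k b => (if k = i then (b.toNat : ℝ) else 1) * rad k x ^ b.toNat),
      ← Finset.mul_prod_erase _ _ hi]
    congr 1
    · simp
    · apply Finset.prod_congr rfl
      intro k hk
      have hki : k ≠ i := Finset.ne_of_mem_erase hk
      simp [hki]
  -- the weighted sum  ∑ j·w_j
  have hT : ∑ j ∈ Finset.range (2 ^ n), (j : ℝ) * walsh j x
      = ∑ i ∈ Finset.range n,
          (2 : ℝ) ^ i * (rad i x * ∏ k ∈ (Finset.range n).erase i, (1 + rad k x)) := by
    have hcast : ∀ j ∈ Finset.range (2 ^ n), (j : ℝ) * walsh j x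
        = ∑ i ∈ Finset.range n, (2 : ℝ) ^ i * (((j.testBit i).toNat : ℝ) * walsh j x) := by
      intro j hj
      simp only [← mul_assoc, ← Finset.sum_mul]
      congr 1
      calc (j : ℝ) = ((∑ i ∈ Finset.range n, 2 ^ i * (j.testBit i).toNat : ℕ) : ℝ) := by
            rw [← nat_eq_sum_bits n j (Finset.mem_range.1 hj)]
        _ = ∑ i ∈ Finset.range n, (2 : ℝ) ^ i * ((j.testBit i).toNat : ℝ) := by push_cast; rfl
    rw [Finset.sum_congr rfl hcast, Finset.sum_comm]
    apply Finset.sum_congr rfl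
    intro i hi
    rw [← Finset.mul_sum, hU i hi]
  -- master formula
  have hfejer : fejer (2 ^ n) x
      = ((2 : ℝ) ^ n)⁻¹ * (2 ^ t * ∏ k ∈ (Finset.range n).erase t, (1 + rad k x)) := by
    unfold fejer
    rw [sum_dirichlet]
    have hsplit : ∑ j ∈ Finset.range (2 ^ n), (((2 ^ n : ℕ) : ℝ) - j) * walsh j x
        = ((2 ^ n : ℕ) : ℝ) * (∑ j ∈ Finset.range (2 ^ n), walsh j x)
          - ∑ j ∈ Finset.range (2 ^ n), (j : ℝ) * walsh j x := by
      rw [Finset.mul_sum, ← Finset.sum_sub_distrib]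
      apply Finset.sum_congr rfl
      intro j _
      ring
    rw [hsplit, hDgen, hT, Finset.prod_eq_zero htn h1rt, mul_zero, zero_sub,
      Finset.sum_eq_single t]
    · rw [hradt]; push_cast; ring
    · intro i hi hne
      have hti : t ∈ (Finset.range n).erase i := Finset.mem_erase.2 ⟨hne.symm, htn⟩
      rw [Finset.prod_eq_zero hti h1rt]
      ring
    · intro h; exact absurd htn h
  refine ⟨?_, ?_, ?_⟩
  · intro h
    have hP : ∏ k ∈ (Finset.range n).erase t, (1 + rad k x) = 2 ^ (n - 1) := by
      rw [Finset.prod_congr rfl (g := fun _ => (2 : ℝ)) ?_, Finset.prod_const,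
        Finset.card_erase_of_mem htn, Finset.card_range]
      intro k hk
      have hkt : k ≠ t := Finset.ne_of_mem_erase hk
      have hkn : k < n := Finset.mem_range.1 (Finset.mem_of_mem_erase hk)
      have hxk : x k = 0 := by rw [h k hkn]; simp [eG, hkt]
      rw [rad_of_zero hxk]; norm_num
    rw [hfejer, hP]
    have hn1 : n - 1 + 1 = n := by omega
    have h2n : (2 : ℝ) ^ n = 2 ^ (n - 1) * 2 := by rw [← pow_succ, hn1]
    rw [h2n]
    have : (2 : ℝ) ^ (n - 1) ≠ 0 := by positivity
    field_simp
  · intro h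
    exact absurd (hxtt ▸ h t hnt) (by decide)
  · intro h1 _
    push_neg at h1
    obtain ⟨l, hl, hlne⟩ := h1
    have hlt : l ≠ t := by
      rintro rfl
      exact hlne (by simp [eG, hxtt])
    have hxl : x l = 1 := by
      rcases zmod2_cases (x l) with h | h
      · exact absurd (by rw [h]; simp [eG, hlt]) hlne
      · exact h
    have hl' : l ∈ (Finset.range n).erase t :=
      Finset.mem_erase.2 ⟨hlt, Finset.mem_range.2 hl⟩
    rw [hfejer, Finset.prod_eq_zero hl' (by rw [rad_of_one hxl]; ring)]
    ring


end
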